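/- The gradient of the Fenchel coupling in its second argument satisfies ∇_Y F(Q, Y) = exp(Y)/tr(exp Y) − Q; i.e., for Hermitian Δ, the directional derivative of Y ↦ F(Q,Y) along Δ is tr[(exp(Y)/tr(exp Y) − Q) Δ]. -/

import Mathlib

open Matrix
open scoped ComplexOrder

/-- The negative von Neumann entropy `h(Q) = tr(Q log Q) = Σ_i q_i log q_i` (with `0 log 0 = 0`). -/
noncomputable def vnEntropy {M : ℕ} (A : Matrix (Fin M) (Fin M) ℂ) : ℝ :=
  if h : A.IsHermitian then ∑ i, h.eigenvalues i * Real.log (h.eigenvalues i) else 0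

/-- The Gibbs state `exp(Y)/tr(exp Y)`. -/
noncomputable def gibbs {M : ℕ} (Y : Matrix (Fin M) (Fin M) ℂ) : Matrix (Fin M) (Fin M) ℂ :=
  ((NormedSpace.exp Y).trace)⁻¹ • NormedSpace.exp Y

/-- The Fenchel coupling `F(Q,Y) = h(Q) + log tr(exp Y) − tr(QY)`. -/
noncomputable def fenchel {M : ℕ} (Q Y : Matrix (Fin M) (Fin M) ℂ) : ℝ :=
  vnEntropy Q + Real.log ((NormedSpace.exp Y).trace.re) - (Q * Y).trace.re

set_option maxHeartbeats 1000000

section Aux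

open NormedSpace

attribute [local instance] Matrix.linftyOpNormedAddCommGroup Matrix.linftyOpNormedRing
  Matrix.linftyOpNormedAlgebra Matrix.linftyOpNormedSpace

variable {M : ℕ}

/-- The trace as a continuous linear map. -/
noncomputable def trCLM (M : ℕ) : Matrix (Fin M) (Fin M) ℂ →L[ℂ] ℂ :=
  LinearMap.toContinuousLinearMap (Matrix.traceLinearMap (Fin M) ℂ ℂ)

lemma trCLM_apply (X : Matrix (Fin M) (Fin M) ℂ) : trCLM M X = X.trace := rfl

lemma hasDerivAt_affine (Y Δ : Matrix (Fin M) (Fin M) ℂ) (t : ℝ) :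
    HasDerivAt (fun s : ℝ => Y + s • Δ) Δ t := by
  have h := ((hasDerivAt_id t).smul_const Δ).const_add Y
  simp only [id, one_smul] at h
  exact h

lemma hasDerivAt_pow_aux (Y Δ : Matrix (Fin M) (Fin M) ℂ) (n : ℕ) (t : ℝ) :
    HasDerivAt (fun s : ℝ => (Y + s • Δ) ^ n)
      (∑ k ∈ Finset.range n, (Y + t • Δ) ^ k * Δ * (Y + t • Δ) ^ (n - 1 - k)) t := by
  induction n with
  | zero =>
    simp only [pow_zero, Finset.range_zero, Finset.sum_empty]
    exact hasDerivAt_const t (1 : Matrix (Fin M) (Fin M) ℂ)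
  | succ n ih =>
    have h := ih.mul (hasDerivAt_affine Y Δ t)
    have e1 : (fun s : ℝ => (Y + s • Δ) ^ n * (Y + s • Δ))
        = fun s : ℝ => (Y + s • Δ) ^ (n + 1) := by
      funext s; rw [← pow_succ]
    rw [← e1]
    refine h.congr_deriv ?_
    symm
    rw [Finset.sum_range_succ, Finset.sum_mul]
    congr 1
    · refine Finset.sum_congr rfl fun k hk => ?_
      rw [Finset.mem_range] at hk
      rw [mul_assoc ((Y + t • Δ) ^ k * Δ), ← pow_succ]
      congr 2
      omega
    · have : n + 1 - 1 - n = 0 := by omega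
      rw [this, pow_zero, mul_one]

lemma hasDerivAt_trace_pow (Y Δ : Matrix (Fin M) (Fin M) ℂ) (n : ℕ) (t : ℝ) :
    HasDerivAt (fun s : ℝ => trCLM M ((Y + s • Δ) ^ n))
      ((n : ℂ) * trCLM M ((Y + t • Δ) ^ (n - 1) * Δ)) t := by
  cases n with
  | zero => simpa using hasDerivAt_const t (trCLM M ((1 : Matrix (Fin M) (Fin M) ℂ)))
  | succ n =>
    have h := ((trCLM M).restrictScalars ℝ).hasFDerivAt.comp_hasDerivAt t
      (hasDerivAt_pow_aux Y Δ (n + 1) t)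
    refine h.congr_deriv ?_
    symm
    set A := Y + t • Δ with hA
    change _ = trCLM M (∑ k ∈ Finset.range (n + 1), A ^ k * Δ * A ^ (n + 1 - 1 - k))
    rw [map_sum]
    have key : ∀ k ∈ Finset.range (n + 1),
        trCLM M (A ^ k * Δ * A ^ (n + 1 - 1 - k)) = trCLM M (A ^ n * Δ) := by
      intro k hk
      rw [Finset.mem_range] at hk
      rw [trCLM_apply, trCLM_apply, Matrix.trace_mul_comm, ← Matrix.mul_assoc, ← pow_add]
      congr 3
      omega
    rw [Finset.sum_congr rfl key, Finset.sum_const, Finset.card_range, nsmul_eq_mul]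
    push_cast
    simp

lemma hasDerivAt_trace_exp (Y Δ : Matrix (Fin M) (Fin M) ℂ) :
    HasDerivAt (fun t : ℝ => (exp (Y + t • Δ)).trace) ((exp Y * Δ).trace) 0 := by
  set τr : @ContinuousLinearMap ℝ ℝ _ _ (RingHom.id ℝ) (Matrix (Fin M) (Fin M) ℂ)
      (inferInstance : SeminormedAddCommGroup (Matrix (Fin M) (Fin M) ℂ)).toUniformSpace.toTopologicalSpace
      _ ℂ _ _ _ _ := (trCLM M).restrictScalars ℝ with hτr
  set R : ℝ := ‖Y‖ + ‖Δ‖ with hR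
  have hR0 : 0 ≤ R := by positivity
  set g : ℕ → ℝ → ℂ := fun n s => ((n.factorial : ℂ))⁻¹ • trCLM M ((Y + s • Δ) ^ n) with hg_def
  set g' : ℕ → ℝ → ℂ := fun n s =>
    ((n.factorial : ℂ))⁻¹ • ((n : ℂ) * trCLM M ((Y + s • Δ) ^ (n - 1) * Δ)) with hg'_def
  set u : ℕ → ℝ := fun n => ‖τr‖ * ‖Δ‖ * (R ^ (n - 1) * (((n-1).factorial : ℝ))⁻¹) with hu_def
  have hu : Summable u := by
    rw [← summable_nat_add_iff 1]
    have h2 := (Real.summable_pow_div_factorial R).mul_left (‖τr‖ * ‖Δ‖)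
    simp only [hu_def, Nat.add_sub_cancel]
    simpa [div_eq_mul_inv] using h2
  have hg : ∀ n (y : ℝ), y ∈ Metric.ball (0 : ℝ) 1 → HasDerivAt (g n) (g' n y) y := by
    intro n y _
    exact (hasDerivAt_trace_pow Y Δ n y).const_smul ((n.factorial : ℂ))⁻¹
  have hbound : ∀ n (y : ℝ), y ∈ Metric.ball (0 : ℝ) 1 → ‖g' n y‖ ≤ u n := by
    intro n y hy
    have hyn : ‖Y + y • Δ‖ ≤ R := by
      refine le_trans (norm_add_le _ _) ?_
      have h3 : ‖y • Δ‖ ≤ ‖Δ‖ := by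
        rw [norm_smul]
        have : ‖y‖ ≤ 1 := le_of_lt (by simpa using hy)
        calc ‖y‖ * ‖Δ‖ ≤ 1 * ‖Δ‖ := by gcongr
          _ = ‖Δ‖ := one_mul _
      linarith
    have hpowm : ∀ m : ℕ, ‖(Y + y • Δ) ^ m * Δ‖ ≤ R ^ m * ‖Δ‖ := by
      intro m
      induction m with
      | zero => simp
      | succ m ih =>
        have : (Y + y • Δ) ^ (m + 1) * Δ = (Y + y • Δ) * ((Y + y • Δ) ^ m * Δ) := by
          rw [pow_succ', mul_assoc]
        rw [this]
        calc ‖(Y + y • Δ) * ((Y + y • Δ) ^ m * Δ)‖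
            ≤ ‖Y + y • Δ‖ * ‖(Y + y • Δ) ^ m * Δ‖ := norm_mul_le _ _
          _ ≤ R * (R ^ m * ‖Δ‖) := by
              apply mul_le_mul hyn ih (norm_nonneg _) hR0
          _ = R ^ (m + 1) * ‖Δ‖ := by rw [pow_succ']; ring
    cases n with
    | zero =>
      simp only [hg'_def, Nat.cast_zero, zero_mul, smul_zero, norm_zero]
      apply mul_nonneg (mul_nonneg (norm_nonneg _) (norm_nonneg _))
      positivity
    | succ m =>
      have hTm : ‖trCLM M ((Y + y • Δ) ^ m * Δ)‖ ≤ ‖τr‖ * (R ^ m * ‖Δ‖) := by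
        calc ‖trCLM M ((Y + y • Δ) ^ m * Δ)‖
            = ‖τr ((Y + y • Δ) ^ m * Δ)‖ := rfl
          _ ≤ ‖τr‖ * ‖(Y + y • Δ) ^ m * Δ‖ := τr.le_opNorm _
          _ ≤ ‖τr‖ * (R ^ m * ‖Δ‖) := by
              exact mul_le_mul_of_nonneg_left (hpowm m) (norm_nonneg _)
      have e1 : ‖(((m+1).factorial : ℂ))⁻¹‖ = (((m+1).factorial : ℝ))⁻¹ := by
        rw [norm_inv, Complex.norm_natCast]
      have e2 : ‖(((m+1 : ℕ)) : ℂ)‖ = (((m+1 : ℕ)) : ℝ) := Complex.norm_natCast _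
      have hnorm : ‖g' (m+1) y‖
          = (((m+1).factorial : ℝ))⁻¹ * ((((m+1:ℕ)) : ℝ) * ‖trCLM M ((Y + y • Δ) ^ m * Δ)‖) := by
        simp only [hg'_def, Nat.add_sub_cancel]
        rw [norm_smul, norm_mul, e1, e2]
      have ha : (((m+1:ℕ)) : ℝ) ≠ 0 := Nat.cast_ne_zero.2 (Nat.succ_ne_zero m)
      have hfac : (((m+1).factorial : ℝ))⁻¹ * (((m+1:ℕ)) : ℝ) = ((m.factorial : ℝ))⁻¹ := by
        have h1 : (((m+1).factorial : ℝ)) = (((m+1:ℕ)) : ℝ) * (m.factorial : ℝ) := by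
          rw [Nat.factorial_succ]; push_cast; ring
        rw [h1, mul_inv, mul_comm ((((m+1:ℕ)) : ℝ))⁻¹, mul_assoc, inv_mul_cancel₀ ha, mul_one]
      rw [hnorm]
      calc (((m+1).factorial : ℝ))⁻¹ * ((((m+1:ℕ)) : ℝ) * ‖trCLM M ((Y + y • Δ) ^ m * Δ)‖)
          = ((m.factorial : ℝ))⁻¹ * ‖trCLM M ((Y + y • Δ) ^ m * Δ)‖ := by
            rw [← mul_assoc, hfac]
        _ ≤ ((m.factorial : ℝ))⁻¹ * (‖τr‖ * (R ^ m * ‖Δ‖)) := by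
            exact mul_le_mul_of_nonneg_left hTm (by positivity)
        _ = u (m + 1) := by
            simp only [hu_def, Nat.add_sub_cancel]; ring
  have hg0 : Summable fun n => g n 0 := by
    have hs : Summable fun n : ℕ => ((n.factorial : ℂ))⁻¹ • (Y + (0:ℝ) • Δ) ^ n :=
      expSeries_summable' (𝕂 := ℂ) _
    have := hs.map ((trCLM M).toLinearMap.toAddMonoidHom) (trCLM M).continuous
    simpa [hg_def, Function.comp_def, _root_.map_smul] using this
  have H := hasDerivAt_tsum_of_isPreconnected hu Metric.isOpen_ball
    (convex_ball (0:ℝ) 1).isPreconnected hg hbound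
    (Metric.mem_ball_self one_pos) hg0 (Metric.mem_ball_self one_pos)
  have hfun : (fun z : ℝ => ∑' n, g n z) = fun t : ℝ => (exp (Y + t • Δ)).trace := by
    funext z
    have hsumz : Summable fun n : ℕ => ((n.factorial : ℂ))⁻¹ • (Y + z • Δ) ^ n :=
      expSeries_summable' (𝕂 := ℂ) _
    rw [exp_eq_tsum ℂ, ← trCLM_apply, (trCLM M).map_tsum hsumz]
    simp [hg_def, _root_.map_smul]
  have hder : (∑' n, g' n 0) = (exp Y * Δ).trace := by
    have hsum' : Summable fun n => g' n 0 :=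
      Summable.of_norm_bounded hu fun n => hbound n 0 (Metric.mem_ball_self one_pos)
    rw [hsum'.tsum_eq_zero_add]
    have h0 : g' 0 0 = 0 := by simp [hg'_def]
    have hs : ∀ m : ℕ, g' (m + 1) 0 = trCLM M (((m.factorial : ℂ))⁻¹ • Y ^ m * Δ) := by
      intro m
      have ha : ((m:ℂ) + 1) ≠ 0 := Nat.cast_add_one_ne_zero m
      have hfacC : (((m+1).factorial : ℂ))⁻¹ * ((m:ℂ) + 1) = ((m.factorial : ℂ))⁻¹ := by
        have h1 : (((m+1).factorial : ℂ)) = ((m:ℂ) + 1) * (m.factorial : ℂ) := by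
          rw [Nat.factorial_succ]; push_cast; ring
        rw [h1, mul_inv, mul_comm (((m:ℂ) + 1))⁻¹, mul_assoc, inv_mul_cancel₀ ha, mul_one]
      rw [Matrix.smul_mul, _root_.map_smul]
      simp only [hg'_def, Nat.add_sub_cancel, smul_eq_mul, zero_smul, add_zero]
      push_cast
      rw [← mul_assoc, hfacC]
    have hsum2 : Summable fun m : ℕ => ((m.factorial : ℂ))⁻¹ • Y ^ m * Δ :=
      (expSeries_summable' (𝕂 := ℂ) Y).mul_right Δ
    calc g' 0 0 + ∑' m, g' (m + 1) 0
        = ∑' m, trCLM M (((m.factorial : ℂ))⁻¹ • Y ^ m * Δ) := by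
          rw [h0, zero_add]; exact tsum_congr hs
      _ = trCLM M (∑' m, ((m.factorial : ℂ))⁻¹ • Y ^ m * Δ) := ((trCLM M).map_tsum hsum2).symm
      _ = trCLM M ((∑' m, ((m.factorial : ℂ))⁻¹ • Y ^ m) * Δ) := by
          exact congrArg (trCLM M) ((expSeries_summable' (𝕂 := ℂ) Y).tsum_mul_right Δ)
      _ = (exp Y * Δ).trace := by
          have hexpY : exp Y = ∑' m : ℕ, ((m.factorial : ℂ))⁻¹ • Y ^ m := by
            rw [exp_eq_tsum ℂ]
          rw [← hexpY, trCLM_apply]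
  rw [hfun, hder] at H
  exact H

lemma trace_exp_real (Y : Matrix (Fin M) (Fin M) ℂ) (hY : Y.IsHermitian) :
    ((exp Y).trace.im) = 0 := by
  have h : (exp Y).IsHermitian := hY.exp
  have := Matrix.trace_conjTranspose (exp Y)
  rw [h.eq] at this
  have : (starRingEnd ℂ) ((exp Y).trace) = (exp Y).trace := this.symm
  have him := congrArg Complex.im this
  simp only [Complex.conj_im] at him
  linarith

lemma trace_exp_pos (Y : Matrix (Fin M) (Fin M) ℂ) (hY : Y.IsHermitian) (hM : 0 < M) :
    0 < (exp Y).trace.re := by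
  set B := exp ((2⁻¹ : ℂ) • Y) with hB
  have hBH : Bᴴ = B := by
    rw [hB, ← Matrix.exp_conjTranspose]
    congr 1
    rw [Matrix.conjTranspose_smul, hY.eq]
    congr 1
    simp [starRingEnd_apply, star_inv₀]
  have hexp : exp Y = B * B := by
    have : Y = (2⁻¹ : ℂ) • Y + (2⁻¹ : ℂ) • Y := by
      rw [← add_smul]; norm_num
    rw [hB, ← Matrix.exp_add_of_commute _ _ (Commute.refl _), ← this]
  have hBne : B ≠ 0 := by
    intro h0
    have hunit : IsUnit B := Matrix.isUnit_exp _
    rw [h0] at hunit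
    haveI : Nonempty (Fin M) := ⟨⟨0, hM⟩⟩
    rw [isUnit_zero_iff] at hunit
    have : (0 : Matrix (Fin M) (Fin M) ℂ) ⟨0, hM⟩ ⟨0, hM⟩
        = (1 : Matrix (Fin M) (Fin M) ℂ) ⟨0, hM⟩ ⟨0, hM⟩ := by rw [hunit]
    simp [Matrix.one_apply] at this
  have hsym : ∀ i j, B j i = star (B i j) := by
    intro i j
    conv_lhs => rw [← hBH]
    rw [Matrix.conjTranspose_apply]
  have htr : (exp Y).trace = ∑ i, ∑ j, (Complex.normSq (B i j) : ℂ) := by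
    rw [hexp, Matrix.trace]
    refine Finset.sum_congr rfl fun i _ => ?_
    rw [Matrix.diag_apply, Matrix.mul_apply]
    refine Finset.sum_congr rfl fun j _ => ?_
    rw [hsym i j, Complex.star_def, Complex.mul_conj]
  rw [htr]
  have hre : (∑ i, ∑ j, (Complex.normSq (B i j) : ℂ)).re
      = ∑ i, ∑ j, Complex.normSq (B i j) := by
    push_cast
    simp
  rw [hre]
  obtain ⟨i, j, hij⟩ : ∃ i j, B i j ≠ 0 := by
    by_contra h
    push_neg at h
    exact hBne (by funext i j; exact h i j)
  refine Finset.sum_pos' (fun i _ => Finset.sum_nonneg fun j _ => Complex.normSq_nonneg _)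
    ⟨i, Finset.mem_univ i, ?_⟩
  refine Finset.sum_pos' (fun j _ => Complex.normSq_nonneg _)
    ⟨j, Finset.mem_univ j, ?_⟩
  exact Complex.normSq_pos.2 hij

end Aux

/-- The gradient of the Fenchel coupling in its second argument is
`exp(Y)/tr(exp Y) − Q`: for every Hermitian direction `Δ`, the directional derivative of
`Y ↦ F(Q,Y)` along `Δ` is `tr[(exp(Y)/tr(exp Y) − Q)Δ]`. -/
theorem fenchel_directional_deriv {M : ℕ}
    (Q Y Δ : Matrix (Fin M) (Fin M) ℂ)
    (hQ : Q.PosSemidef) (htr : Q.trace = 1) (hY : Y.IsHermitian) (hΔ : Δ.IsHermitian) :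
    HasDerivAt (fun t : ℝ => fenchel Q (Y + t • Δ))
      (((gibbs Y - Q) * Δ).trace.re) 0 := by
  rcases Nat.eq_zero_or_pos M with hM | hM
  · subst hM
    have htr0 : ∀ X : Matrix (Fin 0) (Fin 0) ℂ, X.trace = 0 := fun X => by
      simp [Matrix.trace]
    have hconst : (fun t : ℝ => fenchel Q (Y + t • Δ))
        = fun _ : ℝ => vnEntropy Q + Real.log 0 - 0 := by
      funext t
      simp [fenchel, htr0]
    rw [hconst, htr0]
    simpa using hasDerivAt_const (0:ℝ) (vnEntropy Q + Real.log 0 - 0)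
  -- main case
  set r : ℂ := (NormedSpace.exp Y).trace with hr
  have him : r.im = 0 := trace_exp_real Y hY
  have hpos : 0 < r.re := trace_exp_pos Y hY hM
  have hrre : r = (r.re : ℂ) := by
    apply Complex.ext <;> simp [him]
  set D : ℂ := (NormedSpace.exp Y * Δ).trace with hD
  -- derivative of t ↦ tr exp(Y + tΔ)
  have h1 : HasDerivAt (fun t : ℝ => (NormedSpace.exp (Y + t • Δ)).trace) D 0 :=
    hasDerivAt_trace_exp Y Δ
  have h1re : HasDerivAt (fun t : ℝ => (NormedSpace.exp (Y + t • Δ)).trace.re) D.re 0 :=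
    Complex.reCLM.hasFDerivAt.comp_hasDerivAt 0 h1
  have h2 : HasDerivAt (fun t : ℝ => Real.log ((NormedSpace.exp (Y + t • Δ)).trace.re))
      (r.re⁻¹ * D.re) 0 := by
    have hlog : HasDerivAt Real.log r.re⁻¹
        ((fun t : ℝ => (NormedSpace.exp (Y + t • Δ)).trace.re) 0) := by
      have h0 : (fun t : ℝ => (NormedSpace.exp (Y + t • Δ)).trace.re) 0 = r.re := by
        simp [hr]
      rw [h0]
      exact Real.hasDerivAt_log (ne_of_gt hpos)
    exact hlog.comp 0 h1re
  have h3 : HasDerivAt (fun t : ℝ => (Q * (Y + t • Δ)).trace.re) ((Q * Δ).trace.re) 0 := by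
    have heq : (fun t : ℝ => (Q * (Y + t • Δ)).trace.re)
        = fun t : ℝ => (Q * Y).trace.re + t * (Q * Δ).trace.re := by
      funext t
      rw [Matrix.mul_add, Matrix.trace_add, Matrix.mul_smul, Matrix.trace_smul]
      simp [Complex.smul_re]
    rw [heq]
    simpa using ((hasDerivAt_id (0:ℝ)).mul_const ((Q * Δ).trace.re)).const_add
      ((Q * Y).trace.re)
  have hfin : HasDerivAt (fun t : ℝ => fenchel Q (Y + t • Δ))
      (r.re⁻¹ * D.re - (Q * Δ).trace.re) 0 := by
    have := (h2.const_add (vnEntropy Q)).sub h3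
    exact this
  have hval : r.re⁻¹ * D.re - (Q * Δ).trace.re = ((gibbs Y - Q) * Δ).trace.re := by
    rw [gibbs, Matrix.sub_mul, Matrix.trace_sub, Matrix.smul_mul, Matrix.trace_smul]
    rw [← hr, ← hD]
    rw [Complex.sub_re]
    congr 1
    rw [hrre]
    rw [← Complex.ofReal_inv]
    rw [smul_eq_mul, Complex.re_ofReal_mul]
    simp
  rw [← hval]
  exact hfin
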